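/- arXiv:0901.3822 — 2 statements merged into one kernel-verified Lean document; each statement's English description precedes it below -/
import Mathlib

section
/- Let φ₀, φ₁ ∈ A(D) with ‖φ₀‖₁ = ‖φ₁‖₁ = 1. If Re ∫_D (\bar{φ₀}/|φ₀|)·φ₁ dxdy = 1, then φ₁ = φ₀ almost everywhere on D. -/
open MeasureTheory Complex

noncomputable section

/-- The open unit disk in ℂ. -/
def 𝔻 : Set ℂ := Metric.ball 0 1

/-- Planar Lebesgue measure restricted to the unit disk. -/
def vD : MeasureTheory.Measure ℂ := MeasureTheory.volume.restrict 𝔻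

/-- `A(D)`: holomorphic on the disk and integrable there. -/
def AD (φ : ℂ → ℂ) : Prop := DifferentiableOn ℂ φ 𝔻 ∧ MeasureTheory.Integrable φ vD

/-- L¹ norm over the disk. -/
def nrm (φ : ℂ → ℂ) : ℝ := ∫ z, ‖φ z‖ ∂vD

/-- Pairing Re ∫_D μ φ. -/
def pair (μ φ : ℂ → ℂ) : ℝ := (∫ z, μ z * φ z ∂vD).re

/-- Infinitesimal Teichmüller norm. -/
def lam (μ : ℂ → ℂ) : ℝ := sSup {r : ℝ | ∃ φ, AD φ ∧ nrm φ = 1 ∧ r = pair μ φ}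

/-- Unit Teichmüller differential `conj φ / |φ|`. -/
def tmu (φ : ℂ → ℂ) (z : ℂ) : ℂ := (starRingEnd ℂ) (φ z) / ((‖φ z‖ : ℝ) : ℂ)

/-- Cosine of the angle between geodesic directions. -/
def ang (φ ψ : ℂ → ℂ) : ℝ := (∫ z, tmu φ z * ψ z ∂vD).re

end

lemma no_open_real (S : Set ℂ) (hS : IsOpen S) (hne : S.Nonempty)
    (hreal : ∀ w ∈ S, w.im = 0) : False := by
  obtain ⟨w, hw⟩ := hne
  obtain ⟨ε, hε, hb⟩ := Metric.isOpen_iff.1 hS w hw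
  have hmem : w + (ε/2) * Complex.I ∈ S := by
    apply hb
    simp [Metric.mem_ball, dist_eq_norm]
    rw [abs_of_pos hε]; linarith
  have h1 := hreal _ hmem
  simp at h1
  have h2 := hreal w hw
  linarith

lemma re_eq_abs_imp {w : ℂ} (h : w.re = ‖w‖) : w = (‖w‖ : ℂ) := by
  have him : w.im = 0 := by
    have h2 := Complex.sq_norm w
    rw [Complex.normSq_apply, ← h] at h2
    nlinarith [sq_nonneg w.im]
  apply Complex.ext <;> simp [him, ← h]

lemma abs_tmu_le (φ : ℂ → ℂ) (z : ℂ) : ‖tmu φ z‖ ≤ 1 := by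
  unfold tmu
  by_cases h : φ z = 0
  · simp [h]
  · rw [norm_div]
    simp [h]

lemma hD_meas : MeasurableSet 𝔻 := measurableSet_ball

-- step A : pointwise identity holds everywhere on 𝔻
lemma stepA (φ₀ φ₁ : ℂ → ℂ) (h₀ : AD φ₀) (h₁ : AD φ₁)
    (hn₁ : nrm φ₁ = 1)
    (h : (∫ z, tmu φ₀ z * φ₁ z ∂vD).re = 1) :
    ∀ z ∈ 𝔻, φ₁ z * (starRingEnd ℂ) (φ₀ z)
      = ((‖φ₁ z‖ * ‖φ₀ z‖ : ℝ) : ℂ) := by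
  have hm0 : AEMeasurable φ₀ vD := h₀.1.continuousOn.aemeasurable hD_meas
  have htmu : AEMeasurable (tmu φ₀) vD := by
    have h1 : AEMeasurable (fun z => (starRingEnd ℂ) (φ₀ z)) vD :=
      Complex.continuous_conj.measurable.comp_aemeasurable hm0
    have h2 : AEMeasurable (fun z => ((‖φ₀ z‖ : ℝ) : ℂ)) vD :=
      (Complex.continuous_ofReal.comp continuous_norm).measurable.comp_aemeasurable hm0
    exact h1.div h2
  have hprod : AEStronglyMeasurable (fun z => tmu φ₀ z * φ₁ z) vD :=
    (htmu.mul h₁.2.aemeasurable).aestronglyMeasurable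
  have hbound : ∀ z, ‖tmu φ₀ z * φ₁ z‖ ≤ ‖φ₁ z‖ := by
    intro z
    rw [norm_mul]
    calc ‖tmu φ₀ z‖ * ‖φ₁ z‖ ≤ 1 * ‖φ₁ z‖ := by
          apply mul_le_mul_of_nonneg_right _ (norm_nonneg _)
          simpa using abs_tmu_le φ₀ z
      _ = ‖φ₁ z‖ := one_mul _
  have hint : Integrable (fun z => tmu φ₀ z * φ₁ z) vD :=
    (h₁.2.norm.mono' hprod (Filter.Eventually.of_forall hbound))
  have habs : Integrable (fun z => ‖φ₁ z‖) vD := by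
    simpa using h₁.2.norm
  have hre : Integrable (fun z => (tmu φ₀ z * φ₁ z).re) vD := hint.re
  have hptle : ∀ z, (tmu φ₀ z * φ₁ z).re ≤ ‖φ₁ z‖ := by
    intro z
    calc (tmu φ₀ z * φ₁ z).re ≤ ‖tmu φ₀ z * φ₁ z‖ := Complex.re_le_norm _
      _ = ‖tmu φ₀ z‖ * ‖φ₁ z‖ := norm_mul _ _
      _ ≤ 1 * ‖φ₁ z‖ :=
          mul_le_mul_of_nonneg_right (abs_tmu_le φ₀ z) (norm_nonneg _)
      _ = ‖φ₁ z‖ := one_mul _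
  have hintre : ∫ z, (tmu φ₀ z * φ₁ z).re ∂vD = 1 := by
    have := integral_re (𝕜 := ℂ) hint
    simp only [RCLike.re_to_complex] at this
    rw [this, h]
  have hF : Integrable (fun z => ‖φ₁ z‖ - (tmu φ₀ z * φ₁ z).re) vD :=
    habs.sub hre
  have hFzero : ∫ z, (‖φ₁ z‖ - (tmu φ₀ z * φ₁ z).re) ∂vD = 0 := by
    rw [integral_sub habs hre, hintre]
    unfold nrm at hn₁
    rw [hn₁]; ring
  have hFae : (fun z => ‖φ₁ z‖ - (tmu φ₀ z * φ₁ z).re) =ᵐ[vD] 0 := by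
    rw [← integral_eq_zero_iff_of_nonneg_ae _ hF]
    · exact hFzero
    · exact Filter.Eventually.of_forall fun z => sub_nonneg.2 (hptle z)
  -- a.e. pointwise identity
  have hEae : ∀ᵐ z ∂vD, φ₁ z * (starRingEnd ℂ) (φ₀ z)
      = ((‖φ₁ z‖ * ‖φ₀ z‖ : ℝ) : ℂ) := by
    filter_upwards [hFae] with z hz
    simp only [Pi.zero_apply, sub_eq_zero] at hz
    by_cases h0 : φ₀ z = 0
    · have htz : tmu φ₀ z = 0 := by simp [tmu, h0]
      rw [htz] at hz
      simp at hz
      simp [h0, hz]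
    · set a : ℝ := ‖φ₀ z‖ with ha
      have hap : 0 < a := norm_pos_iff.2 h0
      have hrw : tmu φ₀ z * φ₁ z = ((starRingEnd ℂ) (φ₀ z) * φ₁ z) / (a : ℂ) := by
        unfold tmu; ring
      rw [hrw, Complex.div_ofReal_re] at hz
      have hz' : ((starRingEnd ℂ) (φ₀ z) * φ₁ z).re = ‖φ₁ z‖ * a := by
        rw [hz]; field_simp
      have hre2 : ((starRingEnd ℂ) (φ₀ z) * φ₁ z).re
          = ‖(starRingEnd ℂ) (φ₀ z) * φ₁ z‖ := by
        rw [norm_mul, Complex.norm_conj, hz', ← ha]; ring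
      have := re_eq_abs_imp hre2
      rw [norm_mul, Complex.norm_conj] at this
      rw [mul_comm (φ₁ z)]
      rw [this]
      push_cast
      ring
  -- upgrade to everywhere by continuity
  have c1 : ContinuousOn (fun z => φ₁ z * (starRingEnd ℂ) (φ₀ z)) 𝔻 :=
    h₁.1.continuousOn.mul (Complex.continuous_conj.comp_continuousOn h₀.1.continuousOn)
  have c2 : ContinuousOn (fun z => ((‖φ₁ z‖ * ‖φ₀ z‖ : ℝ) : ℂ)) 𝔻 :=
    Complex.continuous_ofReal.comp_continuousOn
      ((continuous_norm.comp_continuousOn h₁.1.continuousOn).mul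
        (continuous_norm.comp_continuousOn h₀.1.continuousOn))
  have hDopen : IsOpen 𝔻 := Metric.isOpen_ball
  have hsub : 𝔻 ⊆ closure (interior 𝔻) := by
    rw [hDopen.interior_eq]
    exact subset_closure
  exact Measure.eqOn_of_ae_eq hEae c1 c2 hsub


/-- equality in the pairing forces φ₁ = φ₀ a.e. -/
theorem stmt3 (φ₀ φ₁ : ℂ → ℂ) (h₀ : AD φ₀) (h₁ : AD φ₁)
    (hn₀ : nrm φ₀ = 1) (hn₁ : nrm φ₁ = 1)
    (h : (∫ z, tmu φ₀ z * φ₁ z ∂vD).re = 1) :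
    ∀ᵐ z ∂vD, φ₁ z = φ₀ z := by
  have hE := stepA φ₀ φ₁ h₀ h₁ hn₁ h
  have hDopen : IsOpen 𝔻 := Metric.isOpen_ball
  have hDconn : IsPreconnected 𝔻 := (convex_ball (0:ℂ) 1).isPreconnected
  have hmemD : ∀ᵐ z ∂vD, z ∈ 𝔻 := ae_restrict_mem hD_meas
  have hex : ∃ z₀ ∈ 𝔻, φ₀ z₀ ≠ 0 := by
    by_contra hc
    push_neg at hc
    have hzero : nrm φ₀ = 0 := by
      unfold nrm
      have he : (fun z => (‖φ₀ z‖ : ℝ)) =ᵐ[vD] 0 := by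
        filter_upwards [hmemD] with z hz
        simp [hc z hz]
      rw [integral_congr_ae he]; simp
    rw [hn₀] at hzero; norm_num at hzero
  obtain ⟨z₀, hz₀, hz₀ne⟩ := hex
  have hct : ContinuousAt φ₀ z₀ := h₀.1.continuousOn.continuousAt (hDopen.mem_nhds hz₀)
  have hev : ∀ᶠ z in nhds z₀, φ₀ z ≠ 0 ∧ z ∈ 𝔻 :=
    (hct.eventually_ne hz₀ne).and (hDopen.mem_nhds hz₀)
  obtain ⟨ε, hε, hball⟩ := Metric.eventually_nhds_iff_ball.1 hev
  set V := Metric.ball z₀ ε with hVdef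
  have hz₀V : z₀ ∈ V := Metric.mem_ball_self hε
  have A0 : AnalyticOnNhd ℂ φ₀ 𝔻 := h₀.1.analyticOnNhd hDopen
  have A1 : AnalyticOnNhd ℂ φ₁ 𝔻 := h₁.1.analyticOnNhd hDopen
  have hAh : AnalyticOnNhd ℂ (fun z => φ₁ z / φ₀ z) V := fun z hz =>
    (A1 z (hball z hz).2).div (A0 z (hball z hz).2) (hball z hz).1
  have hq : ∀ z ∈ V, φ₁ z / φ₀ z
      = ((‖φ₁ z‖ * ‖φ₀ z‖ : ℝ) : ℂ)
        / ((Complex.normSq (φ₀ z) : ℝ) : ℂ) := by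
    intro z hz
    have hcne : (starRingEnd ℂ) (φ₀ z) ≠ 0 := star_ne_zero.2 (hball z hz).1
    rw [← hE z (hball z hz).2, ← Complex.mul_conj, mul_div_mul_right _ _ hcne]
  have hreal : ∀ z ∈ V, (φ₁ z / φ₀ z).im = 0 := by
    intro z hz
    rw [hq z hz, ← Complex.ofReal_div]
    simp
  have hVconn : IsPreconnected V := (convex_ball z₀ ε).isPreconnected
  rcases hAh.is_constant_or_isOpen hVconn with ⟨w, hw⟩ | hopen
  · have hwe : Set.EqOn φ₁ (fun z => w * φ₀ z) V := by
      intro z hz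
      have h2 := hw z hz
      rw [div_eq_iff (hball z hz).1] at h2
      exact h2
    have hEqOn : Set.EqOn φ₁ (fun z => w * φ₀ z) 𝔻 :=
      A1.eqOn_of_preconnected_of_eventuallyEq (analyticOnNhd_const.mul A0) hDconn hz₀
        (Filter.eventuallyEq_of_mem (Metric.isOpen_ball.mem_nhds hz₀V) hwe)
    set c : ℝ := ‖φ₁ z₀‖ * ‖φ₀ z₀‖ / Complex.normSq (φ₀ z₀) with hcdef
    have hcnn : 0 ≤ c := div_nonneg (mul_nonneg (norm_nonneg _) (norm_nonneg _))
      (Complex.normSq_nonneg _)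
    have hqw : w = (c : ℂ) := by
      rw [← hw z₀ hz₀V, hq z₀ hz₀V]
      norm_cast
    have h1c : (1:ℝ) = c := by
      have hcomp : nrm φ₁ = c * nrm φ₀ := by
        unfold nrm
        rw [← integral_const_mul]
        apply integral_congr_ae
        filter_upwards [hmemD] with z hz
        rw [hEqOn hz]
        simp only [hqw]
        rw [norm_mul, Complex.norm_of_nonneg hcnn]
      rw [hn₁, hn₀, mul_one] at hcomp; exact hcomp
    have hw1 : w = 1 := by rw [hqw, ← h1c]; norm_num
    filter_upwards [hmemD] with z hz
    rw [hEqOn hz]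
    simp [hw1]
  · exfalso
    apply no_open_real ((fun z => φ₁ z / φ₀ z) '' V)
      (hopen V le_rfl Metric.isOpen_ball)
    · exact ⟨_, ⟨z₀, hz₀V, rfl⟩⟩
    · rintro _ ⟨z, hz, rfl⟩; exact hreal z hz
end

section
/- If φ, ψ ∈ A(D) are unit-norm and |φ| = |ψ| almost everywhere with c(φ,ψ) = −1, then ψ = −φ almost everywhere, i.e., the angle π between geodesic directions generated by φ and ψ occurs exactly when the directions are opposite. -/
open MeasureTheory Complex

set_option maxHeartbeats 1000000 in
/-- angle π with equal moduli occurs exactly for opposite directions. -/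
theorem stmt17 (φ ψ : ℂ → ℂ) (hφ : AD φ) (hψ : AD ψ)
    (hnφ : nrm φ = 1) (hnψ : nrm ψ = 1)
    (hmod : ∀ᵐ z ∂vD, ‖φ z‖ = ‖ψ z‖)
    (hc : ang φ ψ = -1) :
    ∀ᵐ z ∂vD, ψ z = -φ z := by
  set f : ℂ → ℂ := fun z => tmu φ z * ψ z with hf
  have hφm := hφ.2.aestronglyMeasurable
  have hfm : AEStronglyMeasurable f vD := by
    have h1 : AEMeasurable φ vD := hφm.aemeasurable
    have h2 : AEMeasurable (fun z => (starRingEnd ℂ) (φ z)) vD :=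
      (Complex.continuous_conj.measurable).comp_aemeasurable h1
    have h3 : AEMeasurable (fun z => ((‖φ z‖ : ℝ) : ℂ)) vD :=
      (Complex.continuous_ofReal.measurable.comp
        continuous_norm.measurable).comp_aemeasurable h1
    exact ((h2.div h3).aestronglyMeasurable).mul hψ.2.aestronglyMeasurable
  have hbound : ∀ z, ‖f z‖ ≤ ‖ψ z‖ := by
    intro z
    simp only [hf, tmu, norm_mul, norm_div, Complex.norm_conj, Complex.norm_real,
      norm_norm]
    rcases eq_or_ne (φ z) 0 with h | h
    · simp [h]
    · rw [div_self (by simpa using h)]; simp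
  have hfint : Integrable f vD := by
    refine hψ.2.norm.mono' hfm ?_
    filter_upwards with z
    simpa using hbound z
  have hre : ∫ z, (f z).re ∂vD = -1 := by
    have h := integral_re hfint
    simp only [RCLike.re_to_complex] at h
    rw [h]; exact hc
  have hreint : Integrable (fun z => (f z).re) vD := by
    have := hfint.re
    simpa [RCLike.re_to_complex] using this
  have habsint : Integrable (fun z => ‖ψ z‖) vD := by
    simpa using hψ.2.norm
  have hsum0 : ∫ z, ((f z).re + ‖ψ z‖) ∂vD = 0 := by
    rw [integral_add hreint habsint, hre]
    have : ∫ z, ‖ψ z‖ ∂vD = 1 := hnψ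
    linarith
  have hnonneg : 0 ≤ᵐ[vD] fun z => (f z).re + ‖ψ z‖ := by
    filter_upwards with z
    have h1 : |(f z).re| ≤ ‖f z‖ := Complex.abs_re_le_norm (f z)
    have h1' : -|(f z).re| ≤ (f z).re := neg_abs_le _
    have := hbound z
    simp only [Pi.zero_apply]
    linarith
  have hzero : (fun z => (f z).re + ‖ψ z‖) =ᵐ[vD] 0 :=
    (integral_eq_zero_iff_of_nonneg_ae hnonneg (hreint.add habsint)).mp hsum0
  filter_upwards [hzero, hmod] with z hz hm
  simp only [Pi.zero_apply] at hz
  have hrez : (f z).re = -‖ψ z‖ := by linarith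
  have habs : ‖f z‖ ≤ ‖ψ z‖ := hbound z
  have him : (f z).im = 0 := by
    have h1 : (f z).re ^ 2 + (f z).im ^ 2 = ‖f z‖ ^ 2 := by
      rw [Complex.sq_norm, Complex.normSq_apply]; ring
    have h2 : ‖f z‖ ^ 2 ≤ ‖ψ z‖ ^ 2 := by
      apply pow_le_pow_left₀ (norm_nonneg _) habs
    have h3 : (f z).re ^ 2 = ‖ψ z‖ ^ 2 := by rw [hrez]; ring
    nlinarith [sq_nonneg (f z).im]
  have hfz : f z = -((‖ψ z‖ : ℝ) : ℂ) := by
    apply Complex.ext <;> simp [hrez, him]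
  rcases eq_or_ne (φ z) 0 with h0 | h0
  · have : ‖ψ z‖ = 0 := by rw [← hm, h0]; simp
    have : ψ z = 0 := by simpa using this
    simp [this, h0]
  · have hc0 : (starRingEnd ℂ) (φ z) ≠ 0 := by simpa using h0
    have hab : ((‖φ z‖ : ℝ) : ℂ) ≠ 0 := by
      simpa using h0
    have key : (starRingEnd ℂ) (φ z) * ψ z
        = -((‖ψ z‖ : ℝ) : ℂ) * ((‖φ z‖ : ℝ) : ℂ) := by
      have := hfz
      simp only [hf, tmu] at this
      field_simp at this
      linear_combination this
    have key2 : (starRingEnd ℂ) (φ z) * ψ z = (starRingEnd ℂ) (φ z) * (-φ z) := by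
      rw [key, hm]
      have h5 : φ z * (starRingEnd ℂ) (φ z) = ((Complex.normSq (φ z) : ℝ) : ℂ) :=
        Complex.mul_conj (φ z)
      have h6 : ‖φ z‖ * ‖φ z‖ = Complex.normSq (φ z) := by
        rw [← Complex.sq_norm]; ring
      rw [hm] at h6
      push_cast [← h6] at h5
      linear_combination h5
    exact mul_left_cancel₀ hc0 key2
end
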